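/- arXiv:1803.04657 — 2 statements merged into one kernel-verified Lean document; each statement's English description precedes it below -/
import Mathlib

section
/- Let α < 0 be a real number with f(α) < 0 (equivalently, x0 < α < 0 where x0 ≈ −3.09997 is the root of f). Then for every length vector L with square count n(L) = n ≥ 3, one has Ψ_α(L) ≥ f(α)·(n−1) + 2·g(α) + (n−3)·h(α), with equality if and only if L = (2,2,…,2) with n−1 entries. (This is the lower bound in Proposition 1: among polyomino chains in Ω_n, the zigzag chain Z_n uniquely minimizes χ_α for x0 < α < 0.) -/
noncomputable def f (α : ℝ) : ℝ := 2 * (5:ℝ) ^ α - 6 * (6:ℝ) ^ α + 4 * (7:ℝ) ^ α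
noncomputable def g (α : ℝ) : ℝ := 2 * (6:ℝ) ^ α - (5:ℝ) ^ α - (7:ℝ) ^ α
noncomputable def h (α : ℝ) : ℝ := 5 * (6:ℝ) ^ α - 2 * (5:ℝ) ^ α - 4 * (7:ℝ) ^ α + (8:ℝ) ^ α

/-- A length vector: a nonempty list of segment lengths, each at least 2. -/
def LengthVector (L : List ℕ) : Prop := L ≠ [] ∧ ∀ l ∈ L, 2 ≤ l

/-- Square count of a length vector: `l₁ + ⋯ + l_s − (s − 1)`. -/
def nSq (L : List ℕ) : ℕ := L.sum - (L.length - 1)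

/-- Number of external (first or last) entries equal to 2. -/
def e2 (L : List ℕ) : ℕ :=
  ((Finset.range L.length).filter
    (fun j => (j = 0 ∨ j = L.length - 1) ∧ L.getD j 0 = 2)).card

/-- Number of internal entries (neither first nor last) equal to 2. -/
def i2 (L : List ℕ) : ℕ :=
  ((Finset.range L.length).filter
    (fun j => j ≠ 0 ∧ j ≠ L.length - 1 ∧ L.getD j 0 = 2)).card

/-- The weight Ψ_α(L) = f(α)·s + g(α)·e₂(L) + h(α)·i₂(L). -/
noncomputable def psi (α : ℝ) (L : List ℕ) : ℝ :=
  f α * L.length + g α * e2 L + h α * i2 L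


section Aux
open Set Real

lemma convexOn_rpow_neg {α : ℝ} (hα : α < 0) :
    ConvexOn ℝ (Set.Ioi (0:ℝ)) (fun t : ℝ => t ^ α) := by
  apply convexOn_of_hasDerivWithinAt2_nonneg (f' := fun t => α * t ^ (α - 1))
    (f'' := fun t => α * ((α - 1) * t ^ (α - 2))) (convex_Ioi 0)
  · intro t ht
    exact (Real.continuousAt_rpow_const t α (Or.inl (ne_of_gt ht))).continuousWithinAt
  · intro t ht
    rw [interior_Ioi] at ht
    exact (Real.hasDerivAt_rpow_const (Or.inl (ne_of_gt ht))).hasDerivWithinAt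
  · intro t ht
    rw [interior_Ioi] at ht
    have d1 : HasDerivAt (fun t : ℝ => t ^ (α - 1)) ((α - 1) * t ^ (α - 1 - 1)) t :=
      Real.hasDerivAt_rpow_const (Or.inl (ne_of_gt ht))
    have e : α - 1 - 1 = α - 2 := by ring
    rw [e] at d1
    exact (d1.const_mul α).hasDerivWithinAt
  · intro t ht
    rw [interior_Ioi] at ht
    have h1 : (0:ℝ) < α * (α - 1) := mul_pos_of_neg_of_neg hα (by linarith)
    have h2 : (0:ℝ) ≤ t ^ (α - 2) := Real.rpow_nonneg (le_of_lt ht) _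
    nlinarith

lemma convexOn_phi {α : ℝ} (hα : α < 0) :
    ConvexOn ℝ (Set.Ioi (0:ℝ)) (fun t : ℝ => t ^ α - (t + 1) ^ α) := by
  apply convexOn_of_hasDerivWithinAt2_nonneg
    (f' := fun t => α * t ^ (α - 1) - α * (t + 1) ^ (α - 1))
    (f'' := fun t => α * ((α - 1) * t ^ (α - 2)) - α * ((α - 1) * (t + 1) ^ (α - 2)))
    (convex_Ioi 0)
  · intro t ht
    have c1 := (Real.continuousAt_rpow_const t α (Or.inl (ne_of_gt ht))).continuousWithinAt
      (s := Set.Ioi (0:ℝ))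
    have c2 : ContinuousWithinAt (fun t : ℝ => (t + 1) ^ α) (Set.Ioi 0) t := by
      have ht' : (0:ℝ) < t := ht
      have h1 : ContinuousAt (fun t : ℝ => t + 1) t := by fun_prop
      exact (h1.rpow_const (Or.inl (by positivity))).continuousWithinAt
    exact c1.sub c2
  · intro t ht
    rw [interior_Ioi] at ht
    have d1 : HasDerivAt (fun t : ℝ => t ^ α) (α * t ^ (α - 1)) t :=
      Real.hasDerivAt_rpow_const (Or.inl (ne_of_gt ht))
    have d0 : HasDerivAt (fun t : ℝ => t + 1) 1 t := (hasDerivAt_id t).add_const 1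
    have ht' : (0:ℝ) < t := ht
    have d2 := d0.rpow_const (p := α) (Or.inl (by positivity))
    have := d1.sub d2
    exact (this.congr_deriv (by ring)).hasDerivWithinAt
  · intro t ht
    rw [interior_Ioi] at ht
    have d1 : HasDerivAt (fun t : ℝ => t ^ (α - 1)) ((α - 1) * t ^ (α - 1 - 1)) t :=
      Real.hasDerivAt_rpow_const (Or.inl (ne_of_gt ht))
    have d0 : HasDerivAt (fun t : ℝ => t + 1) 1 t := (hasDerivAt_id t).add_const 1
    have ht' : (0:ℝ) < t := ht
    have d2 := d0.rpow_const (p := α - 1) (Or.inl (by positivity))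
    have e : α - 1 - 1 = α - 2 := by ring
    rw [e] at d1 d2
    have := (d1.const_mul α).sub (d2.const_mul α)
    exact (this.congr_deriv (by ring)).hasDerivWithinAt
  · intro t ht
    rw [interior_Ioi] at ht
    have h1 : (0:ℝ) < α * (α - 1) := mul_pos_of_neg_of_neg hα (by linarith)
    have h2 : (t + 1) ^ (α - 2) ≤ t ^ (α - 2) :=
      Real.rpow_le_rpow_of_nonpos ht (by linarith) (by linarith)
    nlinarith

lemma midpoint_ineq1 {α : ℝ} (hα : α < 0) : 2 * (6:ℝ) ^ α ≤ (5:ℝ) ^ α + (7:ℝ) ^ α := by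
  have := (convexOn_rpow_neg hα).2 (show (5:ℝ) ∈ Ioi 0 by norm_num)
    (show (7:ℝ) ∈ Ioi 0 by norm_num) (by norm_num : (0:ℝ) ≤ 1/2)
    (by norm_num : (0:ℝ) ≤ 1/2) (by norm_num)
  simp only [smul_eq_mul] at this
  norm_num at this
  linarith

lemma midpoint_ineq2 {α : ℝ} (hα : α < 0) :
    2 * ((6:ℝ) ^ α - (7:ℝ) ^ α) ≤ ((5:ℝ) ^ α - (6:ℝ) ^ α) + ((7:ℝ) ^ α - (8:ℝ) ^ α) := by
  have := (convexOn_phi hα).2 (show (5:ℝ) ∈ Ioi 0 by norm_num)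
    (show (7:ℝ) ∈ Ioi 0 by norm_num) (by norm_num : (0:ℝ) ≤ 1/2)
    (by norm_num : (0:ℝ) ≤ 1/2) (by norm_num)
  simp only [smul_eq_mul] at this
  norm_num at this
  linarith

lemma g_nonpos {α : ℝ} (hα : α < 0) : g α ≤ 0 := by
  have := midpoint_ineq1 hα; unfold g; linarith

lemma h_nonpos {α : ℝ} (hα : α < 0) : h α ≤ 0 := by
  have h1 := midpoint_ineq1 hα
  have h2 := midpoint_ineq2 hα
  unfold h; linarith

lemma two_mul_length_le_sum (L : List ℕ) (h2 : ∀ l ∈ L, 2 ≤ l) : 2 * L.length ≤ L.sum := by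
  induction L with
  | nil => simp
  | cons a t ih =>
    simp only [List.length_cons, List.sum_cons]
    have ha := h2 a (by simp)
    have := ih (fun l hl => h2 l (by simp [hl]))
    omega

lemma eq_replicate_of_sum_eq (L : List ℕ) (h2 : ∀ l ∈ L, 2 ≤ l)
    (hs : L.sum = 2 * L.length) : L = List.replicate L.length 2 := by
  induction L with
  | nil => simp
  | cons a t ih =>
    simp only [List.length_cons, List.sum_cons] at hs ⊢
    have ha := h2 a (by simp)
    have ht := two_mul_length_le_sum t (fun l hl => h2 l (by simp [hl]))
    have ha2 : a = 2 := by omega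
    have hts : t.sum = 2 * t.length := by omega
    rw [List.replicate_succ, ha2, ← ih (fun l hl => h2 l (by simp [hl])) hts]

lemma card_ext_filter {m : ℕ} (hm : 2 ≤ m) :
    ((Finset.range m).filter (fun j => j = 0 ∨ j = m - 1)).card = 2 := by
  have he : (Finset.range m).filter (fun j => j = 0 ∨ j = m - 1) = {0, m - 1} := by
    ext j
    simp only [Finset.mem_filter, Finset.mem_range, Finset.mem_insert, Finset.mem_singleton]
    constructor
    · rintro ⟨-, hj⟩; exact hj
    · intro hj; exact ⟨by omega, hj⟩
  rw [he, Finset.card_insert_of_notMem (by simp; omega), Finset.card_singleton]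

lemma card_int_filter {m : ℕ} (hm : 2 ≤ m) :
    ((Finset.range m).filter (fun j => ¬(j = 0 ∨ j = m - 1))).card = m - 2 := by
  have hc := Finset.card_filter_add_card_filter_not (s := Finset.range m)
    (p := fun j => j = 0 ∨ j = m - 1)
  rw [card_ext_filter hm, Finset.card_range] at hc
  omega

lemma e2_le (L : List ℕ) : e2 L ≤ 2 := by
  unfold e2
  have hsub : (Finset.range L.length).filter
      (fun j => (j = 0 ∨ j = L.length - 1) ∧ L.getD j 0 = 2) ⊆ {0, L.length - 1} := by
    intro j hj
    simp only [Finset.mem_filter] at hj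
    simp only [Finset.mem_insert, Finset.mem_singleton]
    tauto
  exact (Finset.card_le_card hsub).trans ((Finset.card_insert_le _ _).trans (by simp))

lemma i2_le (L : List ℕ) : i2 L ≤ L.length - 2 := by
  unfold i2
  rcases le_or_gt L.length 1 with hm | hm
  · have hempty : ∀ j ∈ Finset.range L.length,
        ¬(j ≠ 0 ∧ j ≠ L.length - 1 ∧ L.getD j 0 = 2) := by
      intro j hj
      simp only [Finset.mem_range] at hj
      omega
    rw [Finset.filter_false_of_mem hempty]
    simp
  · have hsub : (Finset.range L.length).filter
        (fun j => j ≠ 0 ∧ j ≠ L.length - 1 ∧ L.getD j 0 = 2) ⊆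
        (Finset.range L.length).filter (fun j => ¬(j = 0 ∨ j = L.length - 1)) := by
      intro j hj
      simp only [Finset.mem_filter] at hj ⊢
      tauto
    exact (Finset.card_le_card hsub).trans (le_of_eq (card_int_filter (by omega)))

lemma getD_replicate_two {m j : ℕ} (hj : j < m) : (List.replicate m 2).getD j 0 = 2 := by
  rw [List.getD_eq_getElem _ _ (by simpa using hj), List.getElem_replicate]

lemma e2_replicate {m : ℕ} (hm : 2 ≤ m) : e2 (List.replicate m 2) = 2 := by
  unfold e2
  rw [List.length_replicate]
  rw [Finset.filter_congr (q := fun j => j = 0 ∨ j = m - 1) ?_]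
  · exact card_ext_filter hm
  · intro j hj
    simp only [Finset.mem_range] at hj
    rw [getD_replicate_two hj]
    simp

lemma i2_replicate {m : ℕ} (hm : 2 ≤ m) : i2 (List.replicate m 2) = m - 2 := by
  unfold i2
  rw [List.length_replicate]
  rw [Finset.filter_congr (q := fun j => ¬(j = 0 ∨ j = m - 1)) ?_]
  · exact card_int_filter hm
  · intro j hj
    simp only [Finset.mem_range] at hj
    rw [getD_replicate_two hj]
    simp

end Aux

/-- Proposition 1, lower bound: if α < 0 and f(α) < 0, then every length vector
with square count n ≥ 3 satisfies Ψ_α(L) ≥ f(α)(n−1) + 2g(α) + (n−3)h(α),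
with equality iff L = (2,…,2) with n−1 entries (the zigzag chain). -/
theorem psi_ge_zigzag (α : ℝ) (hα : α < 0) (hf : f α < 0)
    (L : List ℕ) (hL : LengthVector L) (n : ℕ) (hn : nSq L = n) (hn3 : 3 ≤ n) :
    f α * ((n : ℝ) - 1) + 2 * g α + ((n : ℝ) - 3) * h α ≤ psi α L ∧
      (psi α L = f α * ((n : ℝ) - 1) + 2 * g α + ((n : ℝ) - 3) * h α ↔
        L = List.replicate (n - 1) 2) := by
  obtain ⟨hne, h2⟩ := hL
  have hs1 : 1 ≤ L.length := List.length_pos_iff.mpr hne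
  have hsum : 2 * L.length ≤ L.sum := two_mul_length_le_sum L h2
  have hnsq : L.sum - (L.length - 1) = n := hn
  have hsn : L.length + 1 ≤ n := by omega
  have he2 : e2 L ≤ 2 := e2_le L
  have hi2 : i2 L ≤ L.length - 2 := i2_le L
  have hS : (L.length : ℝ) ≤ (n : ℝ) - 1 := by
    have : (L.length : ℝ) + 1 ≤ (n : ℝ) := by exact_mod_cast hsn
    linarith
  have hE : (e2 L : ℝ) ≤ 2 := by exact_mod_cast he2
  have hI : (i2 L : ℝ) ≤ (n : ℝ) - 3 := by
    have h3 : i2 L + 3 ≤ n := by omega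
    have : (i2 L : ℝ) + 3 ≤ (n : ℝ) := by exact_mod_cast h3
    linarith
  have hg := g_nonpos hα
  have hh := h_nonpos hα
  have key1 : f α * ((n : ℝ) - 1) ≤ f α * L.length :=
    mul_le_mul_of_nonpos_left hS (le_of_lt hf)
  have key2 : g α * 2 ≤ g α * e2 L := mul_le_mul_of_nonpos_left hE hg
  have key3 : h α * ((n : ℝ) - 3) ≤ h α * i2 L := mul_le_mul_of_nonpos_left hI hh
  refine ⟨by unfold psi; linarith, ?_, ?_⟩
  · intro hEq
    unfold psi at hEq
    have hS' : (L.length : ℝ) = (n : ℝ) - 1 := by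
      by_contra hne'
      have hlt : (L.length : ℝ) < (n : ℝ) - 1 := lt_of_le_of_ne hS hne'
      have : f α * ((n : ℝ) - 1) < f α * L.length := mul_lt_mul_of_neg_left hlt hf
      linarith
    have hsn' : L.length = n - 1 := by
      have h1 : (L.length : ℝ) + 1 = (n : ℝ) := by linarith
      have h2' : L.length + 1 = n := by exact_mod_cast h1
      omega
    have hsum2 : L.sum = 2 * L.length := by omega
    rw [← hsn']
    exact eq_replicate_of_sum_eq L h2 hsum2
  · intro hrep
    have hm : 2 ≤ n - 1 := by omega
    rw [hrep]
    unfold psi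
    rw [List.length_replicate, e2_replicate hm, i2_replicate hm]
    have c1 : ((n - 1 : ℕ) : ℝ) = (n : ℝ) - 1 := by
      have : 1 ≤ n := by omega
      push_cast [this]; ring
    have c2 : ((n - 1 - 2 : ℕ) : ℝ) = (n : ℝ) - 3 := by
      have h3' : n - 1 - 2 = n - 3 := by omega
      rw [h3']
      have : 3 ≤ n := hn3
      push_cast [this]; ring
    rw [c1, c2]; ring
end

section
/- Let α < 0 be a real number with f(α) > 0 and f(α) + g(α) = 0 (i.e., α equals the root x1 ≈ −5.46343 of f+g). Then for every length vector L with square count n(L) = n ≥ 3, one has Ψ_α(L) ≤ f(α)·⌊(n−1)/2⌋. Moreover, this bound is attained: if n is odd it is attained by the list (3,3,…,3) with (n−1)/2 entries, and if n is even it is attained both by the list (4,3,3,…,3) with (n−2)/2 entries and by the list (2,3,3,…,3) with n/2 entries. (This corresponds to the second part of Proposition 4: at α = x1 the maximum of χ_α over Ω_n is attained by several non-isomorphic chains.) -/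
section PsiAux

lemma sum_getD (L : List ℕ) : ∑ j ∈ Finset.range L.length, L.getD j 0 = L.sum := by
  induction L with
  | nil => simp
  | cons a t ih =>
    rw [List.length_cons, Finset.sum_range_succ']
    simp [List.getD] at ih ⊢; omega

lemma count_two (L : List ℕ) :
    e2 L + i2 L = ((Finset.range L.length).filter (fun j => L.getD j 0 = 2)).card := by
  classical
  rw [e2, i2, ← Finset.card_union_of_disjoint]
  · congr 1
    ext j
    simp only [Finset.mem_union, Finset.mem_filter, Finset.mem_range]
    tauto
  · simp only [Finset.disjoint_left, Finset.mem_filter]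
    rintro j ⟨-, hP, -⟩ ⟨-, h0, h1, -⟩
    tauto

lemma key_ineq (L : List ℕ) (h2 : ∀ l ∈ L, 2 ≤ l) :
    3 * L.length ≤ L.sum + (e2 L + i2 L) := by
  classical
  rw [count_two, ← sum_getD, Finset.card_filter, ← Finset.sum_add_distrib]
  calc 3 * L.length = ∑ _j ∈ Finset.range L.length, 3 := by
        simp [Finset.sum_const, mul_comm]
    _ ≤ _ := by
        apply Finset.sum_le_sum
        intro j hj
        rw [Finset.mem_range] at hj
        have hmem : 2 ≤ L.getD j 0 := by
          rw [List.getD_eq_getElem _ _ hj]; exact h2 _ (L.getElem_mem hj)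
        split_ifs with hx <;> omega

lemma e2_eq_zero (L : List ℕ) (hL : ∀ l ∈ L, l ≠ 2) : e2 L = 0 := by
  rw [e2, Finset.card_eq_zero, Finset.filter_eq_empty_iff]
  intro j hj
  rw [Finset.mem_range] at hj
  have : L.getD j 0 ≠ 2 := by
    rw [List.getD_eq_getElem _ _ hj]; exact hL _ (L.getElem_mem hj)
  tauto

lemma i2_eq_zero (L : List ℕ) (hL : ∀ l ∈ L, l ≠ 2) : i2 L = 0 := by
  rw [i2, Finset.card_eq_zero, Finset.filter_eq_empty_iff]
  intro j hj
  rw [Finset.mem_range] at hj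
  have : L.getD j 0 ≠ 2 := by
    rw [List.getD_eq_getElem _ _ hj]; exact hL _ (L.getElem_mem hj)
  tauto

lemma i2_cons_replicate (a k : ℕ) : i2 (a :: List.replicate k 3) = 0 := by
  rw [i2, Finset.card_eq_zero, Finset.filter_eq_empty_iff]
  intro j hj
  simp only [Finset.mem_range, List.length_cons, List.length_replicate] at hj
  rintro ⟨h0, h1, hval⟩
  obtain ⟨j', rfl⟩ : ∃ j', j = j' + 1 := ⟨j - 1, by omega⟩
  rw [List.getD_cons_succ] at hval
  have : j' < k := by omega
  simp [List.getD, List.getElem?_replicate, this] at hval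

lemma e2_two_cons (k : ℕ) (hk : 1 ≤ k) : e2 ((2:ℕ) :: List.replicate k 3) = 1 := by
  rw [e2]
  have : ((Finset.range (2 :: List.replicate k 3).length).filter
      (fun j => (j = 0 ∨ j = (2 :: List.replicate k 3).length - 1) ∧
        (2 :: List.replicate k 3).getD j 0 = 2)) = {0} := by
    ext j
    simp only [Finset.mem_filter, Finset.mem_range, Finset.mem_singleton, List.length_cons,
      List.length_replicate, Nat.add_sub_cancel]
    constructor
    · rintro ⟨hj, (rfl | hjk), hval⟩
      · rfl
      · exfalso
        obtain ⟨j', rfl⟩ : ∃ j', j = j' + 1 := ⟨j - 1, by omega⟩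
        rw [List.getD_cons_succ] at hval
        have hj' : j' < k := by omega
        simp [List.getD, List.getElem?_replicate, hj'] at hval
    · rintro rfl
      exact ⟨by omega, Or.inl rfl, rfl⟩
  rw [this, Finset.card_singleton]

end PsiAux

/-- Proposition 4, second part: if α < 0, f(α) > 0 and f(α) + g(α) = 0, then
every length vector with square count n ≥ 3 satisfies Ψ_α(L) ≤ f(α)·⌊(n−1)/2⌋,
and the bound is attained: by (3,…,3) with (n−1)/2 entries when n is odd, and
both by (4,3,…,3) with (n−2)/2 entries and by (2,3,…,3) with n/2 entries when
n is even. -/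

theorem psi_le_at_root_fg (α : ℝ) (hα : α < 0) (hf : 0 < f α) (hfg : f α + g α = 0)
    (n : ℕ) (hn3 : 3 ≤ n) :
    (∀ L : List ℕ, LengthVector L → nSq L = n →
      psi α L ≤ f α * (((n - 1) / 2 : ℕ) : ℝ)) ∧
    (Odd n → psi α (List.replicate ((n - 1) / 2) 3) = f α * (((n - 1) / 2 : ℕ) : ℝ)) ∧
    (Even n →
      psi α (4 :: List.replicate ((n - 4) / 2) 3) = f α * (((n - 1) / 2 : ℕ) : ℝ) ∧
      psi α (2 :: List.replicate (n / 2 - 1) 3) = f α * (((n - 1) / 2 : ℕ) : ℝ)) := by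
  have hg : g α = -f α := by linarith
  have h86 : (8:ℝ) ^ α < (6:ℝ) ^ α :=
    Real.rpow_lt_rpow_of_neg (by norm_num) (by norm_num) hα
  have hh : h α ≤ -f α := by
    simp only [f, h] at *
    linarith
  refine ⟨?_, ?_, ?_⟩
  · intro L hLV hn
    obtain ⟨hne, hL2⟩ := hLV
    have hs1 : 1 ≤ L.length := List.length_pos_iff.mpr hne
    have hkey := key_ineq L hL2
    have ht : e2 L + i2 L ≤ L.length := by
      rw [count_two]
      calc _ ≤ (Finset.range L.length).card := Finset.card_filter_le _ _
        _ = L.length := Finset.card_range _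
    have hn' : L.sum - (L.length - 1) = n := hn
    have hnat : L.length ≤ (n - 1) / 2 + (e2 L + i2 L) := by omega
    have hcast : (L.length : ℝ) ≤ (((n - 1) / 2 : ℕ) : ℝ) + ((e2 L : ℝ) + (i2 L : ℝ)) := by
      exact_mod_cast hnat
    have hi2 : (0:ℝ) ≤ (i2 L : ℝ) := Nat.cast_nonneg _
    have h1 : h α * (i2 L : ℝ) ≤ -f α * (i2 L : ℝ) := mul_le_mul_of_nonneg_right hh hi2
    have h2' := mul_le_mul_of_nonneg_left hcast hf.le
    rw [psi, hg]
    nlinarith [h2', h1]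
  · intro _
    have hmem : ∀ l ∈ List.replicate ((n - 1) / 2) 3, l ≠ 2 := by
      intro l hl
      rw [List.eq_of_mem_replicate hl]
      omega
    rw [psi, e2_eq_zero _ hmem, i2_eq_zero _ hmem]
    simp
  · intro heven
    have hmod : n % 2 = 0 := Nat.even_iff.mp heven
    constructor
    · have hmem : ∀ l ∈ (4 :: List.replicate ((n - 4) / 2) 3), l ≠ 2 := by
        intro l hl
        rcases List.mem_cons.mp hl with rfl | hl
        · omega
        · rw [List.eq_of_mem_replicate hl]; omega
      rw [psi, e2_eq_zero _ hmem, i2_eq_zero _ hmem]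
      have hlen : (4 :: List.replicate ((n - 4) / 2) 3).length = (n - 1) / 2 := by
        simp only [List.length_cons, List.length_replicate]
        omega
      rw [hlen]
      simp
    · have hk : 1 ≤ n / 2 - 1 := by omega
      rw [psi, e2_two_cons _ hk, i2_cons_replicate]
      have hq : (n - 1) / 2 = (n / 2 - 1) + 1 - 1 := by omega
      simp only [List.length_cons, List.length_replicate, Nat.cast_zero, mul_zero, add_zero,
        Nat.cast_one, mul_one, hg]
      have : ((n - 1) / 2 : ℕ) = n / 2 - 1 := by omega
      rw [this]
      push_cast [Nat.one_le_iff_ne_zero.mp hk]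
      ring
end
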